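/- The subgroup of SL_2(ℂ) generated by the matrices [[i,0],[0,−i]] and (1/2)[[i−1, i−1],[i+1, −(i+1)]] has order 24 (it is the binary tetrahedral group A_4^{SL_2}). -/

import Mathlib

open Matrix Complex Quaternion

abbrev V : Type := ℤ × ℤ × ℤ × ℤ

def hm (x y : V) : V :=
  ((x.1*y.1 - x.2.1*y.2.1 - x.2.2.1*y.2.2.1 - x.2.2.2*y.2.2.2)/2,
   (x.1*y.2.1 + x.2.1*y.1 + x.2.2.1*y.2.2.2 - x.2.2.2*y.2.2.1)/2,
   (x.1*y.2.2.1 - x.2.1*y.2.2.2 + x.2.2.1*y.1 + x.2.2.2*y.2.1)/2,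
   (x.1*y.2.2.2 + x.2.1*y.2.2.1 - x.2.2.1*y.2.1 + x.2.2.2*y.1)/2)

def ev (x y : V) : Prop :=
  (x.1*y.1 - x.2.1*y.2.1 - x.2.2.1*y.2.2.1 - x.2.2.2*y.2.2.2) % 2 = 0 ∧
  (x.1*y.2.1 + x.2.1*y.1 + x.2.2.1*y.2.2.2 - x.2.2.2*y.2.2.1) % 2 = 0 ∧
  (x.1*y.2.2.1 - x.2.1*y.2.2.2 + x.2.2.1*y.1 + x.2.2.2*y.2.1) % 2 = 0 ∧
  (x.1*y.2.2.2 + x.2.1*y.2.2.1 - x.2.2.1*y.2.1 + x.2.2.2*y.1) % 2 = 0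

instance (x y : V) : Decidable (ev x y) := by unfold ev; infer_instance

def qv (x : V) : ℍ[ℚ] := ⟨(x.1 : ℚ)/2, (x.2.1 : ℚ)/2, (x.2.2.1 : ℚ)/2, (x.2.2.2 : ℚ)/2⟩

lemma cast_half {n : ℤ} (h : n % 2 = 0) : ((n/2 : ℤ) : ℚ) = (n : ℚ)/2 := by
  obtain ⟨k, rfl⟩ := Int.dvd_of_emod_eq_zero h
  push_cast [Int.mul_ediv_cancel_left k (by norm_num : (2:ℤ) ≠ 0)]
  ring

lemma qv_mul (x y : V) (h : ev x y) : qv x * qv y = qv (hm x y) := by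
  obtain ⟨h1, h2, h3, h4⟩ := h
  ext
  · show (qv x * qv y).re = _
    rw [Quaternion.re_mul]
    show _ = ((_/2 : ℤ) : ℚ)/2
    rw [cast_half h1]; simp only [qv]; push_cast; ring
  · show (qv x * qv y).imI = _
    rw [Quaternion.imI_mul]
    show _ = ((_/2 : ℤ) : ℚ)/2
    rw [cast_half h2]; simp only [qv]; push_cast; ring
  · show (qv x * qv y).imJ = _
    rw [Quaternion.imJ_mul]
    show _ = ((_/2 : ℤ) : ℚ)/2
    rw [cast_half h3]; simp only [qv]; push_cast; ring
  · show (qv x * qv y).imK = _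
    rw [Quaternion.imK_mul]
    show _ = ((_/2 : ℤ) : ℚ)/2
    rw [cast_half h4]; simp only [qv]; push_cast; ring

noncomputable def fq (r : ℍ[ℚ]) : Matrix (Fin 2) (Fin 2) ℂ :=
  !![(r.re : ℂ) + r.imI * I, (r.imJ : ℂ) + r.imK * I;
     -(r.imJ : ℂ) + r.imK * I, (r.re : ℂ) - r.imI * I]

lemma fq_one : fq 1 = 1 := by
  ext i j
  fin_cases i <;> fin_cases j <;> simp [fq]

lemma fq_mul (p q : ℍ[ℚ]) : fq (p * q) = fq p * fq q := by
  ext i j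
  fin_cases i <;> fin_cases j <;>
    simp [fq, Matrix.mul_apply, Fin.sum_univ_two, Quaternion.re_mul, Quaternion.imI_mul,
      Quaternion.imJ_mul, Quaternion.imK_mul, Complex.ext_iff] <;>
    first
      | exact ⟨trivial, trivial⟩
      | (constructor <;> first | trivial | (push_cast; ring))

lemma fq_det (r : ℍ[ℚ]) :
    (fq r).det = ((r.re^2 + r.imI^2 + r.imJ^2 + r.imK^2 : ℚ) : ℂ) := by
  simp only [fq, Matrix.det_fin_two_of]
  push_cast
  linear_combination (-(r.imI : ℂ)^2 - (r.imK : ℂ)^2) * Complex.I_sq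

lemma fq_inj : Function.Injective fq := by
  intro p q h
  rw [← Matrix.ext_iff] at h
  have h00 := h 0 0
  have h01 := h 0 1
  simp [fq, Complex.ext_iff] at h00 h01
  ext <;> simp [h00.1, h00.2, h01.1, h01.2]

lemma qv_inj : Function.Injective qv := by
  intro x y h
  rw [Quaternion.ext_iff] at h
  obtain ⟨h1, h2, h3, h4⟩ := h
  simp only [qv, div_left_inj' (by norm_num : (2:ℚ) ≠ 0)] at h1 h2 h3 h4
  have e1 : x.1 = y.1 := by exact_mod_cast h1
  have e2 : x.2.1 = y.2.1 := by exact_mod_cast h2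
  have e3 : x.2.2.1 = y.2.2.1 := by exact_mod_cast h3
  have e4 : x.2.2.2 = y.2.2.2 := by exact_mod_cast h4
  exact Prod.ext e1 (Prod.ext e2 (Prod.ext e3 e4))

lemma qv_two_one : qv (2, 0, 0, 0) = 1 := by
  ext <;> norm_num [qv]

def L : Finset V := {(0, 2, 0, 0), (-1, 1, -1, 1), (-2, 0, 0, 0), (-1, -1, -1, -1), (-1, -1, 1, 1), (-1, -1, 1, -1), (0, -2, 0, 0), (1, -1, 1, -1), (1, -1, -1, 1), (1, -1, 1, 1), (1, 1, 1, -1), (1, -1, -1, -1), (2, 0, 0, 0), (1, 1, 1, 1), (1, 1, -1, -1), (1, 1, -1, 1), (-1, 1, 1, 1), (-1, 1, -1, -1), (0, 0, -2, 0), (0, 0, 0, 2), (-1, 1, 1, -1), (-1, -1, -1, 1), (0, 0, 0, -2), (0, 0, 2, 0)}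

noncomputable def ψ (x : V) : Matrix.SpecialLinearGroup (Fin 2) ℂ :=
  if h : (fq (qv x)).det = 1 then ⟨fq (qv x), h⟩ else 1

lemma hdetL : ∀ x ∈ L, (fq (qv x)).det = 1 := by
  intro x hx
  have h4 : (x.1:ℚ)^2 + (x.2.1:ℚ)^2 + (x.2.2.1:ℚ)^2 + (x.2.2.2:ℚ)^2 = 4 := by
    have : x.1^2 + x.2.1^2 + x.2.2.1^2 + x.2.2.2^2 = 4 := by fin_cases hx <;> decide
    exact_mod_cast this
  have e1 : ((qv x).re^2 + (qv x).imI^2 + (qv x).imJ^2 + (qv x).imK^2 : ℚ)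
      = ((x.1:ℚ)^2 + (x.2.1:ℚ)^2 + (x.2.2.1:ℚ)^2 + (x.2.2.2:ℚ)^2)/4 := by
    simp only [qv]; ring
  rw [fq_det, e1, h4]
  norm_num

lemma ψ_spec : ∀ x ∈ L, ((ψ x : Matrix.SpecialLinearGroup (Fin 2) ℂ) : Matrix (Fin 2) (Fin 2) ℂ)
    = fq (qv x) := by
  intro x hx
  have e : ψ x = ⟨fq (qv x), hdetL x hx⟩ := by unfold ψ; exact dif_pos (hdetL x hx)
  rw [e]

theorem stmt_9 (A B : Matrix.SpecialLinearGroup (Fin 2) ℂ)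
    (hA : (A : Matrix (Fin 2) (Fin 2) ℂ) = !![I, 0; 0, -I])
    (hB : (B : Matrix (Fin 2) (Fin 2) ℂ) =
      !![(I - 1) / 2, (I - 1) / 2; (I + 1) / 2, -(I + 1) / 2]) :
    Nat.card (Subgroup.closure {A, B}) = 24 := by
  classical
  set G := Subgroup.closure {A, B} with hGdef
  have hAeq : (A : Matrix (Fin 2) (Fin 2) ℂ) = fq (qv (0, 2, 0, 0)) := by
    rw [hA]; ext i j; fin_cases i <;> fin_cases j <;> simp [fq, qv] <;> push_cast <;> ring
  have hBeq : (B : Matrix (Fin 2) (Fin 2) ℂ) = fq (qv (-1, 1, -1, 1)) := by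
    rw [hB]; ext i j; fin_cases i <;> fin_cases j <;> simp [fq, qv] <;> push_cast <;> ring
  have hclosed : ∀ p ∈ L, ∀ q ∈ L, ev p q ∧ hm p q ∈ L := by decide
  have hinvL : ∀ p ∈ L, ∃ y ∈ L, ev p y ∧ hm p y = (2,0,0,0) ∧ ev y p ∧ hm y p = (2,0,0,0) := by
    decide
  let S : Subgroup (Matrix.SpecialLinearGroup (Fin 2) ℂ) :=
    { carrier := {g | ∃ x ∈ L, (g : Matrix (Fin 2) (Fin 2) ℂ) = fq (qv x)}
      one_mem' := ⟨(2,0,0,0), by decide, by rw [qv_two_one, fq_one]; simp⟩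
      mul_mem' := by
        rintro x y ⟨p, hp, hxp⟩ ⟨q, hq, hyq⟩
        obtain ⟨hev, hmem⟩ := hclosed p hp q hq
        exact ⟨hm p q, hmem, by rw [← qv_mul _ _ hev, fq_mul, ← hxp, ← hyq]; simp⟩
      inv_mem' := by
        rintro x ⟨p, hp, hxp⟩
        obtain ⟨y, hy, e1, e2, e3, e4⟩ := hinvL p hp
        refine ⟨y, hy, ?_⟩
        have key : (x : Matrix (Fin 2) (Fin 2) ℂ) * fq (qv y) = 1 := by
          rw [hxp, ← fq_mul, qv_mul _ _ e1, e2, qv_two_one, fq_one]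
        have h5 : ((x⁻¹ : Matrix.SpecialLinearGroup (Fin 2) ℂ) : Matrix (Fin 2) (Fin 2) ℂ) * x = 1 := by
          rw [← Matrix.SpecialLinearGroup.coe_mul, inv_mul_cancel,
            Matrix.SpecialLinearGroup.coe_one]
        calc ((x⁻¹ : Matrix.SpecialLinearGroup (Fin 2) ℂ) : Matrix (Fin 2) (Fin 2) ℂ)
            = ↑x⁻¹ * ((x : Matrix (Fin 2) (Fin 2) ℂ) * fq (qv y)) := by rw [key, mul_one]
          _ = (((x⁻¹ : Matrix.SpecialLinearGroup (Fin 2) ℂ) : Matrix (Fin 2) (Fin 2) ℂ) * x) * fq (qv y) := by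
              rw [mul_assoc]
          _ = fq (qv y) := by rw [h5, one_mul] }
  have hmemS : ∀ g : Matrix.SpecialLinearGroup (Fin 2) ℂ,
      g ∈ S ↔ ∃ x ∈ L, (g : Matrix (Fin 2) (Fin 2) ℂ) = fq (qv x) := fun g => Iff.rfl
  have hAmem : A ∈ S := (hmemS A).2 ⟨(0,2,0,0), by decide, hAeq⟩
  have hBmem : B ∈ S := (hmemS B).2 ⟨(-1,1,-1,1), by decide, hBeq⟩
  have hGS : G ≤ S := by
    rw [hGdef]
    refine (Subgroup.closure_le S).2 ?_
    intro g hg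
    rcases hg with rfl | rfl
    · exact hAmem
    · exact hBmem
  let P : V → Prop := fun v => ∃ g' ∈ G, (g' : Matrix (Fin 2) (Fin 2) ℂ) = fq (qv v)
  have Pmul : ∀ v w, P v → P w → ev v w → P (hm v w) := by
    rintro v w ⟨g1, hg1, f1⟩ ⟨g2, hg2, f2⟩ hev
    exact ⟨g1 * g2, mul_mem hg1 hg2, by rw [← qv_mul _ _ hev, fq_mul, ← f1, ← f2]; simp⟩
  have ha : P (0, 2, 0, 0) := ⟨A, Subgroup.subset_closure (by simp), hAeq⟩
  have hb : P (-1, 1, -1, 1) := ⟨B, Subgroup.subset_closure (by simp), hBeq⟩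
  have haa : P (-2, 0, 0, 0) := (by decide : hm (0, 2, 0, 0) (0, 2, 0, 0) = (-2, 0, 0, 0)) ▸ Pmul _ _ ha ha (by decide)
  have hab : P (-1, -1, -1, -1) := (by decide : hm (0, 2, 0, 0) (-1, 1, -1, 1) = (-1, -1, -1, -1)) ▸ Pmul _ _ ha hb (by decide)
  have hba : P (-1, -1, 1, 1) := (by decide : hm (-1, 1, -1, 1) (0, 2, 0, 0) = (-1, -1, 1, 1)) ▸ Pmul _ _ hb ha (by decide)
  have hbb : P (-1, -1, 1, -1) := (by decide : hm (-1, 1, -1, 1) (-1, 1, -1, 1) = (-1, -1, 1, -1)) ▸ Pmul _ _ hb hb (by decide)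
  have haaa : P (0, -2, 0, 0) := (by decide : hm (-2, 0, 0, 0) (0, 2, 0, 0) = (0, -2, 0, 0)) ▸ Pmul _ _ haa ha (by decide)
  have haab : P (1, -1, 1, -1) := (by decide : hm (-2, 0, 0, 0) (-1, 1, -1, 1) = (1, -1, 1, -1)) ▸ Pmul _ _ haa hb (by decide)
  have haba : P (1, -1, -1, 1) := (by decide : hm (-1, -1, -1, -1) (0, 2, 0, 0) = (1, -1, -1, 1)) ▸ Pmul _ _ hab ha (by decide)
  have habb : P (1, -1, 1, 1) := (by decide : hm (-1, -1, -1, -1) (-1, 1, -1, 1) = (1, -1, 1, 1)) ▸ Pmul _ _ hab hb (by decide)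
  have hbab : P (1, 1, 1, -1) := (by decide : hm (-1, -1, 1, 1) (-1, 1, -1, 1) = (1, 1, 1, -1)) ▸ Pmul _ _ hba hb (by decide)
  have hbba : P (1, -1, -1, -1) := (by decide : hm (-1, -1, 1, -1) (0, 2, 0, 0) = (1, -1, -1, -1)) ▸ Pmul _ _ hbb ha (by decide)
  have hbbb : P (2, 0, 0, 0) := (by decide : hm (-1, -1, 1, -1) (-1, 1, -1, 1) = (2, 0, 0, 0)) ▸ Pmul _ _ hbb hb (by decide)
  have haaab : P (1, 1, 1, 1) := (by decide : hm (0, -2, 0, 0) (-1, 1, -1, 1) = (1, 1, 1, 1)) ▸ Pmul _ _ haaa hb (by decide)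
  have haaba : P (1, 1, -1, -1) := (by decide : hm (1, -1, 1, -1) (0, 2, 0, 0) = (1, 1, -1, -1)) ▸ Pmul _ _ haab ha (by decide)
  have haabb : P (1, 1, -1, 1) := (by decide : hm (1, -1, 1, -1) (-1, 1, -1, 1) = (1, 1, -1, 1)) ▸ Pmul _ _ haab hb (by decide)
  have habab : P (-1, 1, 1, 1) := (by decide : hm (1, -1, -1, 1) (-1, 1, -1, 1) = (-1, 1, 1, 1)) ▸ Pmul _ _ haba hb (by decide)
  have hbaba : P (-1, 1, -1, -1) := (by decide : hm (1, 1, 1, -1) (0, 2, 0, 0) = (-1, 1, -1, -1)) ▸ Pmul _ _ hbab ha (by decide)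
  have hbabb : P (0, 0, -2, 0) := (by decide : hm (1, 1, 1, -1) (-1, 1, -1, 1) = (0, 0, -2, 0)) ▸ Pmul _ _ hbab hb (by decide)
  have hbbab : P (0, 0, 0, 2) := (by decide : hm (1, -1, -1, -1) (-1, 1, -1, 1) = (0, 0, 0, 2)) ▸ Pmul _ _ hbba hb (by decide)
  have haaaba : P (-1, 1, 1, -1) := (by decide : hm (1, 1, 1, 1) (0, 2, 0, 0) = (-1, 1, 1, -1)) ▸ Pmul _ _ haaab ha (by decide)
  have haabab : P (-1, -1, -1, 1) := (by decide : hm (1, 1, -1, -1) (-1, 1, -1, 1) = (-1, -1, -1, 1)) ▸ Pmul _ _ haaba hb (by decide)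
  have hababb : P (0, 0, 0, -2) := (by decide : hm (-1, 1, 1, 1) (-1, 1, -1, 1) = (0, 0, 0, -2)) ▸ Pmul _ _ habab hb (by decide)
  have hbbaba : P (0, 0, 2, 0) := (by decide : hm (0, 0, 0, 2) (0, 2, 0, 0) = (0, 0, 2, 0)) ▸ Pmul _ _ hbbab ha (by decide)
  have hPL : ∀ x ∈ L, P x := by
    intro x hx
    fin_cases hx
    exacts [ha, hb, haa, hab, hba, hbb, haaa, haab, haba, habb, hbab, hbba, hbbb, haaab, haaba, haabb, habab, hbaba, hbabb, hbbab, haaaba, haabab, hababb, hbbaba]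
  have hSG : S ≤ G := by
    intro g hg
    obtain ⟨x, hx, hgx⟩ := (hmemS g).1 hg
    obtain ⟨g', hg', f⟩ := hPL x hx
    exact (Subtype.ext (hgx.trans f.symm) : g = g') ▸ hg'
  have hGeqS : G = S := le_antisymm hGS hSG
  rw [hGeqS]
  have hinj : Set.InjOn ψ ↑L := by
    intro x hx y hy h
    have : fq (qv x) = fq (qv y) := by
      rw [← ψ_spec x (Finset.mem_coe.1 hx), ← ψ_spec y (Finset.mem_coe.1 hy), h]
    exact qv_inj (fq_inj this)
  have hcar : (S : Set (Matrix.SpecialLinearGroup (Fin 2) ℂ)) = ψ '' ↑L := by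
    ext g
    simp only [SetLike.mem_coe, hmemS, Set.mem_image, Finset.mem_coe]
    constructor
    · rintro ⟨x, hx, hgx⟩
      exact ⟨x, hx, Subtype.ext ((ψ_spec x hx).trans hgx.symm)⟩
    · rintro ⟨x, hx, rfl⟩
      exact ⟨x, hx, ψ_spec x hx⟩
  have e2 : Nat.card S = Nat.card (ψ '' (↑L : Set V)) := by rw [← hcar]; rfl
  rw [e2, Nat.card_coe_set_eq, Set.ncard_image_of_injOn hinj, Set.ncard_coe_finset]
  rfl
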